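/- Let n ≥ 1, let X be an n×n positive semidefinite complex matrix, let Y be an n×n Hermitian complex matrix whose eigenvalues all lie in an interval [a, b], and let f : [a, b] → ℝ be monotonically increasing. Then ‖[X, f(Y)]‖₁ ≤ (Tr X)·(f(b) − f(a)). -/

import Mathlib

open scoped ComplexOrder

/-- The trace norm of a complex matrix: `Tr √(Aᴴ A)`, the sum of singular values. -/
noncomputable def traceNorm {n : ℕ} (A : Matrix (Fin n) (Fin n) ℂ) : ℝ :=
  ((Matrix.posSemidef_conjTranspose_mul_self A).1.eigenvectorUnitary.1 *
      Matrix.diagonal (((↑) : ℝ → ℂ) ∘ Real.sqrt ∘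
        (Matrix.posSemidef_conjTranspose_mul_self A).1.eigenvalues) *
      (star (Matrix.posSemidef_conjTranspose_mul_self A).1.eigenvectorUnitary :
        Matrix (Fin n) (Fin n) ℂ)).trace.re

/-- For a Hermitian matrix `Y = Σⱼ yⱼ |φⱼ⟩⟨φⱼ|`, the matrix `f(Y) = Σⱼ f(yⱼ) |φⱼ⟩⟨φⱼ|`
(junk value `0` if `Y` is not Hermitian). -/
noncomputable def matFun {n : ℕ} (f : ℝ → ℝ) (Y : Matrix (Fin n) (Fin n) ℂ) :
    Matrix (Fin n) (Fin n) ℂ :=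
  if hY : Y.IsHermitian then
    (hY.eigenvectorUnitary : Matrix (Fin n) (Fin n) ℂ) *
      Matrix.diagonal (fun i => (f (hY.eigenvalues i) : ℂ)) *
      (star hY.eigenvectorUnitary : Matrix (Fin n) (Fin n) ℂ)
  else 0

namespace TNAux

open Matrix

variable {n m : ℕ}

lemma inner_equiv_symm (x y : Fin n → ℂ) :
    inner ℂ ((WithLp.equiv 2 ((i : Fin n) → (fun _ => ℂ) i)).symm x)
      ((WithLp.equiv 2 ((i : Fin n) → (fun _ => ℂ) i)).symm y) = star x ⬝ᵥ y := by
  rw [EuclideanSpace.inner_eq_star_dotProduct, dotProduct_comm]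
  rfl

lemma star_dot_comm (u v : Fin n → ℂ) : star u ⬝ᵥ v = star (star v ⬝ᵥ u) := by
  simp [dotProduct, map_sum, mul_comm]

lemma dot_shift (A : Matrix (Fin n) (Fin n) ℂ) (p z : Fin n → ℂ) :
    star p ⬝ᵥ (A *ᵥ z) = star (Aᴴ *ᵥ p) ⬝ᵥ z := by
  rw [Matrix.dotProduct_mulVec, Matrix.star_mulVec, Matrix.conjTranspose_conjTranspose]

lemma abs_star_dot_le (u v : Fin n → ℂ) :
    ‖star u ⬝ᵥ v‖ ≤ Real.sqrt (star u ⬝ᵥ u).re * Real.sqrt (star v ⬝ᵥ v).re := by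
  have h := norm_inner_le_norm (𝕜 := ℂ) (E := EuclideanSpace ℂ (Fin n))
    ((WithLp.equiv 2 _).symm u) ((WithLp.equiv 2 _).symm v)
  rw [inner_equiv_symm] at h
  have hu : ‖(WithLp.equiv 2 _).symm u‖ = Real.sqrt (star u ⬝ᵥ u).re := by
    rw [norm_eq_sqrt_re_inner (𝕜 := ℂ), inner_equiv_symm]; rfl
  have hv : ‖(WithLp.equiv 2 _).symm v‖ = Real.sqrt (star v ⬝ᵥ v).re := by
    rw [norm_eq_sqrt_re_inner (𝕜 := ℂ), inner_equiv_symm]; rfl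
  rw [hu, hv] at h
  exact h

lemma bessel (S : Finset (Fin m)) (u : Fin m → (Fin n → ℂ))
    (hu : ∀ i ∈ S, ∀ j ∈ S, star (u i) ⬝ᵥ u j = if i = j then 1 else 0)
    (x : Fin n → ℂ) (hx : star x ⬝ᵥ x = 1) :
    ∑ i ∈ S, ‖star (u i) ⬝ᵥ x‖ ^ 2 ≤ 1 := by
  classical
  set w : {i // i ∈ S} → EuclideanSpace ℂ (Fin n) := fun i => (WithLp.equiv 2 _).symm (u i) with hw
  have hortho : Orthonormal ℂ w := by
    rw [orthonormal_iff_ite]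
    intro i j
    rw [hw]
    simp only []
    rw [inner_equiv_symm, hu i i.2 j j.2]
    by_cases h : (i : Fin m) = j
    · simp [h, Subtype.ext h]
    · have h2 : i ≠ j := fun hc => h (congrArg Subtype.val hc)
      simp [h, h2]
  have hb := hortho.sum_inner_products_le (x := (WithLp.equiv 2 _).symm x) (s := Finset.univ)
  have hxn : ‖(WithLp.equiv 2 ((i : Fin n) → ℂ)).symm x‖ ^ 2 = 1 := by
    rw [norm_eq_sqrt_re_inner (𝕜 := ℂ), inner_equiv_symm, hx,
      Real.sq_sqrt] <;> norm_num
  rw [hxn] at hb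
  refine le_trans (le_of_eq ?_) hb
  rw [← Finset.sum_coe_sort S]
  apply Finset.sum_congr rfl
  intro i _
  rw [hw]
  simp only []
  rw [inner_equiv_symm]

lemma trace_re_nonneg {A : Matrix (Fin n) (Fin n) ℂ} (hA : A.PosSemidef) : 0 ≤ A.trace.re := by
  rw [Matrix.trace, Complex.re_sum]
  apply Finset.sum_nonneg
  intro i _
  have h := hA.re_dotProduct_nonneg (Pi.single i 1)
  simpa [Matrix.mulVec_single, Matrix.diag, dotProduct, Pi.single_apply, apply_ite] using h

noncomputable def psdSqrt {P : Matrix (Fin n) (Fin n) ℂ} (hP : P.PosSemidef) :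
    Matrix (Fin n) (Fin n) ℂ :=
  (hP.1.eigenvectorUnitary : Matrix (Fin n) (Fin n) ℂ) *
    Matrix.diagonal (fun i => ((Real.sqrt (hP.1.eigenvalues i) : ℝ) : ℂ)) *
    (star hP.1.eigenvectorUnitary : Matrix (Fin n) (Fin n) ℂ)

lemma psdSqrt_posSemidef {P : Matrix (Fin n) (Fin n) ℂ} (hP : P.PosSemidef) :
    (psdSqrt hP).PosSemidef := by
  have hD : (Matrix.diagonal (fun i => ((Real.sqrt (hP.1.eigenvalues i) : ℝ) : ℂ))).PosSemidef := by
    rw [Matrix.posSemidef_diagonal_iff]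
    intro i
    exact_mod_cast Real.sqrt_nonneg _
  exact hD.mul_mul_conjTranspose_same (hP.1.eigenvectorUnitary : Matrix (Fin n) (Fin n) ℂ)

lemma psdSqrt_mul_self {P : Matrix (Fin n) (Fin n) ℂ} (hP : P.PosSemidef) :
    psdSqrt hP * psdSqrt hP = P := by
  have h1 : psdSqrt hP * psdSqrt hP = (hP.1.eigenvectorUnitary : Matrix (Fin n) (Fin n) ℂ) *
      (Matrix.diagonal (fun i => ((Real.sqrt (hP.1.eigenvalues i) : ℝ) : ℂ)) *
        ((star hP.1.eigenvectorUnitary : Matrix (Fin n) (Fin n) ℂ) *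
          (hP.1.eigenvectorUnitary : Matrix (Fin n) (Fin n) ℂ)) *
        Matrix.diagonal (fun i => ((Real.sqrt (hP.1.eigenvalues i) : ℝ) : ℂ))) *
      (star hP.1.eigenvectorUnitary : Matrix (Fin n) (Fin n) ℂ) := by
    simp only [psdSqrt, Matrix.mul_assoc]
  rw [h1, Matrix.UnitaryGroup.star_mul_self, Matrix.mul_one, Matrix.diagonal_mul_diagonal]
  conv_rhs => rw [hP.1.spectral_theorem, Unitary.conjStarAlgAut_apply]
  congr 2
  congr 1
  funext i
  rw [← Complex.ofReal_mul, Real.mul_self_sqrt (hP.eigenvalues_nonneg i)]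
  rfl

lemma trace_mul_re_nonneg {P Q : Matrix (Fin n) (Fin n) ℂ} (hP : P.PosSemidef)
    (hQ : Q.PosSemidef) : 0 ≤ (P * Q).trace.re := by
  have hsq := psdSqrt_mul_self hP
  have hpsd : ((psdSqrt hP) * Q * (psdSqrt hP)ᴴ).PosSemidef := hQ.mul_mul_conjTranspose_same _
  rw [(psdSqrt_posSemidef hP).1.eq] at hpsd
  have h2 : P * Q = psdSqrt hP * (psdSqrt hP * Q) := by rw [← Matrix.mul_assoc, hsq]
  have h3 : (P * Q).trace = (psdSqrt hP * Q * psdSqrt hP).trace := by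
    rw [h2, Matrix.trace_mul_comm, Matrix.mul_assoc]
  rw [h3]
  exact trace_re_nonneg hpsd

lemma trace_unitary_conj (U : Matrix.unitaryGroup (Fin n) ℂ) (D : Matrix (Fin n) (Fin n) ℂ) :
    ((U : Matrix (Fin n) (Fin n) ℂ) * D * (star U : Matrix (Fin n) (Fin n) ℂ)).trace = D.trace := by
  rw [Matrix.trace_mul_cycle, Matrix.UnitaryGroup.star_mul_self, Matrix.one_mul]

lemma trace_re_eq_sum_eigenvalues {A : Matrix (Fin n) (Fin n) ℂ} (hA : A.IsHermitian) :
    A.trace.re = ∑ i, hA.eigenvalues i := by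
  conv_lhs => rw [hA.spectral_theorem, Unitary.conjStarAlgAut_apply]
  rw [trace_unitary_conj, Matrix.trace_diagonal, Complex.re_sum]
  simp

lemma basis_dot_eq_ite {A : Matrix (Fin n) (Fin n) ℂ} (hA : A.IsHermitian) (i j : Fin n) :
    star (⇑(hA.eigenvectorBasis i) : Fin n → ℂ) ⬝ᵥ ⇑(hA.eigenvectorBasis j)
      = if i = j then 1 else 0 := by
  have h := orthonormal_iff_ite.mp hA.eigenvectorBasis.orthonormal i j
  rw [EuclideanSpace.inner_eq_star_dotProduct, dotProduct_comm] at h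
  exact h

lemma re_dot_eq_sum {X : Matrix (Fin n) (Fin n) ℂ} (hX : X.PosSemidef) (p : Fin n → ℂ) :
    (star p ⬝ᵥ (X *ᵥ p)).re =
      ∑ j, hX.1.eigenvalues j *
        ‖star (⇑(hX.1.eigenvectorBasis j) : Fin n → ℂ) ⬝ᵥ p‖ ^ 2 := by
  set W := hX.1.eigenvectorUnitary
  have hs : X *ᵥ p = (W : Matrix (Fin n) (Fin n) ℂ) *ᵥ
      ((Matrix.diagonal (RCLike.ofReal ∘ hX.1.eigenvalues)) *ᵥ
        ((star W : Matrix (Fin n) (Fin n) ℂ) *ᵥ p)) := by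
    conv_lhs => rw [hX.1.spectral_theorem, Unitary.conjStarAlgAut_apply]
    rw [← Matrix.mulVec_mulVec, ← Matrix.mulVec_mulVec]
  rw [hs, dot_shift]
  have hWH : (W : Matrix (Fin n) (Fin n) ℂ)ᴴ = (star W : Matrix (Fin n) (Fin n) ℂ) := rfl
  rw [hWH]
  set w : Fin n → ℂ := (star W : Matrix (Fin n) (Fin n) ℂ) *ᵥ p with hw
  have hterm : star w ⬝ᵥ (Matrix.diagonal (RCLike.ofReal ∘ hX.1.eigenvalues) *ᵥ w)
      = ∑ j, (RCLike.ofReal (hX.1.eigenvalues j) : ℂ) * (Complex.normSq (w j) : ℂ) := by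
    simp only [dotProduct, Matrix.mulVec_diagonal, Pi.star_apply, Function.comp_apply]
    apply Finset.sum_congr rfl
    intro j _
    simp only [RCLike.star_def, Complex.normSq_eq_conj_mul_self]
    ring1
  rw [hterm, Complex.re_sum]
  apply Finset.sum_congr rfl
  intro j _
  have hwj : w j = star (⇑(hX.1.eigenvectorBasis j) : Fin n → ℂ) ⬝ᵥ p := by
    rw [hw]
    simp only [Matrix.mulVec, dotProduct, Matrix.star_apply, Pi.star_apply]
    apply Finset.sum_congr rfl
    intro k _
    rfl
  rw [hwj, Complex.sq_norm]
  push_cast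
  simp

lemma sum_re_dot_le_trace {X : Matrix (Fin n) (Fin n) ℂ} (hX : X.PosSemidef)
    (S : Finset (Fin m)) (u : Fin m → (Fin n → ℂ))
    (hu : ∀ i ∈ S, ∀ j ∈ S, star (u i) ⬝ᵥ u j = if i = j then 1 else 0) :
    ∑ i ∈ S, (star (u i) ⬝ᵥ (X *ᵥ u i)).re ≤ X.trace.re := by
  classical
  have h1 : ∑ i ∈ S, (star (u i) ⬝ᵥ (X *ᵥ u i)).re
      = ∑ j, hX.1.eigenvalues j *
          ∑ i ∈ S, ‖star (⇑(hX.1.eigenvectorBasis j) : Fin n → ℂ) ⬝ᵥ u i‖ ^ 2 := by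
    have h0 : ∑ i ∈ S, (star (u i) ⬝ᵥ (X *ᵥ u i)).re
        = ∑ i ∈ S, ∑ j, hX.1.eigenvalues j *
            ‖star (⇑(hX.1.eigenvectorBasis j) : Fin n → ℂ) ⬝ᵥ u i‖ ^ 2 := by
      apply Finset.sum_congr rfl
      intro i _
      rw [re_dot_eq_sum hX]
    rw [h0, Finset.sum_comm]
    apply Finset.sum_congr rfl
    intro j _
    rw [Finset.mul_sum]
  rw [h1, trace_re_eq_sum_eigenvalues hX.1]
  apply Finset.sum_le_sum
  intro j _
  have hb : ∑ i ∈ S, ‖star (⇑(hX.1.eigenvectorBasis j) : Fin n → ℂ) ⬝ᵥ u i‖ ^ 2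
      ≤ 1 := by
    have hcomm : ∀ i, ‖star (⇑(hX.1.eigenvectorBasis j) : Fin n → ℂ) ⬝ᵥ u i‖
        = ‖star (u i) ⬝ᵥ (⇑(hX.1.eigenvectorBasis j) : Fin n → ℂ)‖ := by
      intro i
      rw [star_dot_comm]
      exact Complex.norm_conj _
    simp_rw [hcomm]
    apply bessel S u hu
    have := basis_dot_eq_ite hX.1 j j
    simpa using this
  calc hX.1.eigenvalues j *
        ∑ i ∈ S, ‖star (⇑(hX.1.eigenvectorBasis j) : Fin n → ℂ) ⬝ᵥ u i‖ ^ 2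
      ≤ hX.1.eigenvalues j * 1 := by
        apply mul_le_mul_of_nonneg_left hb (hX.eigenvalues_nonneg j)
    _ = hX.1.eigenvalues j := mul_one _

lemma traceNorm_eq_sum_sqrt (M : Matrix (Fin n) (Fin n) ℂ) :
    traceNorm M = ∑ i, Real.sqrt ((Matrix.posSemidef_conjTranspose_mul_self M).1.eigenvalues i)
    := by
  rw [traceNorm, trace_unitary_conj, Matrix.trace_diagonal,
    Complex.re_sum]
  simp

lemma unit_mul_star (U : Matrix.unitaryGroup (Fin n) ℂ) :
    (U : Matrix (Fin n) (Fin n) ℂ) * (star U : Matrix (Fin n) (Fin n) ℂ) = 1 :=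
  Matrix.mem_unitaryGroup_iff.mp U.2

lemma conj_isHermitian (U : Matrix.unitaryGroup (Fin n) ℂ) (g : Fin n → ℝ) :
    ((U : Matrix (Fin n) (Fin n) ℂ) * Matrix.diagonal (fun i => (g i : ℂ)) *
      (star U : Matrix (Fin n) (Fin n) ℂ)).IsHermitian := by
  have hD : (Matrix.diagonal (fun i => (g i : ℂ)))ᴴ = Matrix.diagonal (fun i => (g i : ℂ)) := by
    ext i j
    by_cases h : i = j
    · simp [Matrix.conjTranspose_apply, Matrix.diagonal_apply, h, Complex.conj_ofReal]
    · simp [Matrix.conjTranspose_apply, Matrix.diagonal_apply, h, Ne.symm h]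
  show _ᴴ = _
  rw [Matrix.conjTranspose_mul, Matrix.conjTranspose_mul, hD]
  have h2 : ((star U : Matrix (Fin n) (Fin n) ℂ))ᴴ = (U : Matrix (Fin n) (Fin n) ℂ) := by
    have h0 : (star U : Matrix (Fin n) (Fin n) ℂ) = (U : Matrix (Fin n) (Fin n) ℂ)ᴴ := rfl
    rw [h0, Matrix.conjTranspose_conjTranspose]
  have h4 : ((U : Matrix (Fin n) (Fin n) ℂ))ᴴ = (star U : Matrix (Fin n) (Fin n) ℂ) := rfl
  rw [h2, h4, ← Matrix.mul_assoc]

lemma conj_mul_conj (U : Matrix.unitaryGroup (Fin n) ℂ) (g h : Fin n → ℝ) :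
    ((U : Matrix (Fin n) (Fin n) ℂ) * Matrix.diagonal (fun i => (g i : ℂ)) *
      (star U : Matrix (Fin n) (Fin n) ℂ)) *
    ((U : Matrix (Fin n) (Fin n) ℂ) * Matrix.diagonal (fun i => (h i : ℂ)) *
      (star U : Matrix (Fin n) (Fin n) ℂ))
    = (U : Matrix (Fin n) (Fin n) ℂ) * Matrix.diagonal (fun i => (g i * h i : ℂ)) *
      (star U : Matrix (Fin n) (Fin n) ℂ) := by
  have h1 : ((U : Matrix (Fin n) (Fin n) ℂ) * Matrix.diagonal (fun i => (g i : ℂ)) *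
      (star U : Matrix (Fin n) (Fin n) ℂ)) *
    ((U : Matrix (Fin n) (Fin n) ℂ) * Matrix.diagonal (fun i => (h i : ℂ)) *
      (star U : Matrix (Fin n) (Fin n) ℂ))
      = (U : Matrix (Fin n) (Fin n) ℂ) * (Matrix.diagonal (fun i => (g i : ℂ)) *
        ((star U : Matrix (Fin n) (Fin n) ℂ) * (U : Matrix (Fin n) (Fin n) ℂ)) *
        Matrix.diagonal (fun i => (h i : ℂ))) * (star U : Matrix (Fin n) (Fin n) ℂ) := by
    simp only [Matrix.mul_assoc]
  rw [h1, Matrix.UnitaryGroup.star_mul_self, Matrix.mul_one, Matrix.diagonal_mul_diagonal]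

lemma conj_posSemidef (U : Matrix.unitaryGroup (Fin n) ℂ) (g : Fin n → ℝ) (hg : ∀ i, 0 ≤ g i) :
    ((U : Matrix (Fin n) (Fin n) ℂ) * Matrix.diagonal (fun i => (g i : ℂ)) *
      (star U : Matrix (Fin n) (Fin n) ℂ)).PosSemidef := by
  have hD : (Matrix.diagonal (fun i => (g i : ℂ))).PosSemidef := by
    rw [Matrix.posSemidef_diagonal_iff]
    intro i
    exact_mod_cast hg i
  exact hD.mul_mul_conjTranspose_same (U : Matrix (Fin n) (Fin n) ℂ)

lemma diag_sub_smul_one (lam : Fin n → ℝ) (c : ℝ) :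
    Matrix.diagonal (fun i => ((lam i - c : ℝ) : ℂ))
      = Matrix.diagonal (fun i => ((lam i : ℝ) : ℂ)) - (c : ℂ) • (1 : Matrix (Fin n) (Fin n) ℂ)
    := by
  ext i j
  by_cases h : i = j <;>
    simp [Matrix.diagonal_apply, Matrix.one_apply, h, Complex.ofReal_sub]

lemma sum_mul_le_sqrt_mul_sqrt (S : Finset (Fin m)) (r s : Fin m → ℝ) :
    ∑ i ∈ S, r i * s i
      ≤ Real.sqrt (∑ i ∈ S, r i ^ 2) * Real.sqrt (∑ i ∈ S, s i ^ 2) := by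
  have h := Finset.sum_mul_sq_le_sq_mul_sq S r s
  calc ∑ i ∈ S, r i * s i ≤ |∑ i ∈ S, r i * s i| := le_abs_self _
    _ = Real.sqrt ((∑ i ∈ S, r i * s i) ^ 2) := (Real.sqrt_sq_eq_abs _).symm
    _ ≤ Real.sqrt ((∑ i ∈ S, r i ^ 2) * ∑ i ∈ S, s i ^ 2) := Real.sqrt_le_sqrt h
    _ = _ := Real.sqrt_mul (Finset.sum_nonneg fun i _ => sq_nonneg _) _

lemma dot_BXB (Bm Xm : Matrix (Fin n) (Fin n) ℂ) (hB : Bmᴴ = Bm) (p : Fin n → ℂ) :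
    star (Bm *ᵥ p) ⬝ᵥ (Xm *ᵥ (Bm *ᵥ p)) = star p ⬝ᵥ ((Bm * Xm * Bm) *ᵥ p) := by
  conv_rhs => rw [← Matrix.mulVec_mulVec, ← Matrix.mulVec_mulVec]
  rw [dot_shift _ p, hB]

lemma trace_mul_le_of_le {Xm Bm : Matrix (Fin n) (Fin n) ℂ} (hX : Xm.PosSemidef)
    (e2 : ℝ) (hR : (((e2 : ℝ) : ℂ) • 1 - Bm * Bm).PosSemidef) :
    (Bm * Xm * Bm).trace.re ≤ e2 * Xm.trace.re := by
  have h2 : (Bm * Xm * Bm).trace = (Xm * (Bm * Bm)).trace := by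
    rw [Matrix.trace_mul_cycle, Matrix.trace_mul_comm]
  have h4 := trace_mul_re_nonneg hX hR
  have h5 : (Xm * (((e2 : ℝ) : ℂ) • 1 - Bm * Bm)).trace.re
      = e2 * Xm.trace.re - (Xm * (Bm * Bm)).trace.re := by
    rw [Matrix.mul_sub, Matrix.trace_sub, Complex.sub_re, Matrix.mul_smul, Matrix.mul_one,
      Matrix.trace_smul, smul_eq_mul, Complex.re_ofReal_mul]
  rw [h2]
  linarith

lemma smul_one_sub_conj_posSemidef (U : Matrix.unitaryGroup (Fin n) ℂ) (g : Fin n → ℝ)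
    (e2 : ℝ) (hg : ∀ i, g i * g i ≤ e2) :
    (((e2 : ℝ) : ℂ) • (1 : Matrix (Fin n) (Fin n) ℂ) -
      ((U : Matrix (Fin n) (Fin n) ℂ) * Matrix.diagonal (fun i => (g i : ℂ)) *
        (star U : Matrix (Fin n) (Fin n) ℂ)) *
      ((U : Matrix (Fin n) (Fin n) ℂ) * Matrix.diagonal (fun i => (g i : ℂ)) *
        (star U : Matrix (Fin n) (Fin n) ℂ))).PosSemidef := by
  rw [conj_mul_conj]
  have hdc : Matrix.diagonal (fun _ : Fin n => ((e2 : ℝ) : ℂ))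
      = ((e2 : ℝ) : ℂ) • (1 : Matrix (Fin n) (Fin n) ℂ) := by
    ext i j
    by_cases h : i = j <;> simp [Matrix.diagonal_apply, Matrix.one_apply, h]
  have h1 : ((e2 : ℝ) : ℂ) • (1 : Matrix (Fin n) (Fin n) ℂ)
      = (U : Matrix (Fin n) (Fin n) ℂ) * Matrix.diagonal (fun _ : Fin n => ((e2 : ℝ) : ℂ)) *
        (star U : Matrix (Fin n) (Fin n) ℂ) := by
    rw [hdc, Matrix.mul_smul, Matrix.mul_one, Matrix.smul_mul, unit_mul_star]
  rw [h1, ← Matrix.sub_mul, ← Matrix.mul_sub, Matrix.diagonal_sub]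
  have h3 : (fun i => (((e2 - g i * g i : ℝ)) : ℂ))
      = fun i => ((e2 : ℝ) : ℂ) - ((g i : ℂ) * (g i : ℂ)) := by
    funext i
    push_cast
    ring
  rw [← h3]
  refine conj_posSemidef U (fun i => e2 - g i * g i) ?_
  intro i
  show (0 : ℝ) ≤ e2 - g i * g i
  linarith [hg i]

end TNAux

open Matrix in
set_option maxHeartbeats 1000000 in
theorem trace_norm_commutator_le_trace_mul {n : ℕ} (hn : 1 ≤ n)
    (X Y : Matrix (Fin n) (Fin n) ℂ) (hX : X.PosSemidef) (hY : Y.IsHermitian)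
    (a b : ℝ) (hspec : ∀ i, hY.eigenvalues i ∈ Set.Icc a b)
    (f : ℝ → ℝ) (hf : MonotoneOn f (Set.Icc a b)) :
    traceNorm (X * matFun f Y - matFun f Y * X) ≤ X.trace.re * (f b - f a) := by
  classical
  have hab : a ≤ b := le_trans (hspec ⟨0, hn⟩).1 (hspec ⟨0, hn⟩).2
  set c : ℝ := (f a + f b) / 2 with hc
  set e : ℝ := (f b - f a) / 2 with he
  have hfab : f a ≤ f b := hf ⟨le_rfl, hab⟩ ⟨hab, le_rfl⟩ hab
  have he0 : 0 ≤ e := by rw [he]; linarith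
  set U := hY.eigenvectorUnitary with hUdef
  set g : Fin n → ℝ := fun i => f (hY.eigenvalues i) - c with hgdef
  have hge : ∀ i, g i ^ 2 ≤ e ^ 2 := by
    intro i
    have h1 := hspec i
    have h2 : f a ≤ f (hY.eigenvalues i) := hf ⟨le_rfl, hab⟩ h1 h1.1
    have h3 : f (hY.eigenvalues i) ≤ f b := hf h1 ⟨hab, le_rfl⟩ h1.2
    have hgi : g i = f (hY.eigenvalues i) - c := rfl
    nlinarith [h2, h3]
  obtain ⟨B, hBdef⟩ : ∃ B' : Matrix (Fin n) (Fin n) ℂ, B' = (U : Matrix (Fin n) (Fin n) ℂ) *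
      Matrix.diagonal (fun i => (g i : ℂ)) * (star U : Matrix (Fin n) (Fin n) ℂ) := ⟨_, rfl⟩
  have hBH : Bᴴ = B := by rw [hBdef]; exact TNAux.conj_isHermitian U g
  have hFeq : matFun f Y = (U : Matrix (Fin n) (Fin n) ℂ) *
      Matrix.diagonal (fun i => (f (hY.eigenvalues i) : ℂ)) *
      (star U : Matrix (Fin n) (Fin n) ℂ) := by
    rw [matFun, dif_pos hY]
  have hBF : B = matFun f Y - (c : ℂ) • 1 := by
    rw [hFeq, hBdef]
    have hdg : (fun i => (g i : ℂ))
        = fun i => ((f (hY.eigenvalues i) - c : ℝ) : ℂ) := rfl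
    rw [hdg, TNAux.diag_sub_smul_one (fun i => f (hY.eigenvalues i)) c,
      Matrix.mul_sub, Matrix.sub_mul, Matrix.mul_smul, Matrix.mul_one,
      Matrix.smul_mul, TNAux.unit_mul_star]
  obtain ⟨M, hMdef⟩ : ∃ M' : Matrix (Fin n) (Fin n) ℂ, M' = X * B - B * X := ⟨_, rfl⟩
  have hcommM : X * matFun f Y - matFun f Y * X = M := by
    rw [hMdef, hBF, Matrix.mul_sub, Matrix.sub_mul, Matrix.mul_smul, Matrix.mul_one,
      Matrix.smul_mul, Matrix.one_mul]
    abel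
  rw [hcommM]
  -- spectral data of Mᴴ * M
  have hA : (Mᴴ * M).PosSemidef := Matrix.posSemidef_conjTranspose_mul_self M
  set μ : Fin n → ℝ := hA.1.eigenvalues with hmudef
  set v : Fin n → (Fin n → ℂ) := fun j => ⇑(hA.1.eigenvectorBasis j) with hvdef
  have hv : ∀ i j, star (v i) ⬝ᵥ v j = if i = j then 1 else 0 := fun i j =>
    TNAux.basis_dot_eq_ite hA.1 i j
  have hμ0 : ∀ j, 0 ≤ μ j := fun j => hA.eigenvalues_nonneg j
  set σ : Fin n → ℝ := fun j => Real.sqrt (μ j) with hσdef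
  have hMvv : ∀ i j, star (M *ᵥ v i) ⬝ᵥ (M *ᵥ v j)
      = if i = j then ((μ j : ℝ) : ℂ) else 0 := by
    intro i j
    have h1 : star (v i) ⬝ᵥ ((Mᴴ * M) *ᵥ v j) = star (M *ᵥ v i) ⬝ᵥ (M *ᵥ v j) := by
      rw [← Matrix.mulVec_mulVec, TNAux.dot_shift, Matrix.conjTranspose_conjTranspose]
    have h2 : (Mᴴ * M) *ᵥ v j = (μ j) • v j := hA.1.mulVec_eigenvectorBasis j
    rw [← h1, h2, dotProduct_smul, hv i j]
    by_cases h : i = j <;> simp [h, Complex.real_smul]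
  set S : Finset (Fin n) := Finset.univ.filter (fun j => μ j ≠ 0) with hSdef
  set u : Fin n → (Fin n → ℂ) := fun i => (((σ i)⁻¹ : ℝ) : ℂ) • (M *ᵥ v i) with hudef
  have hσpos : ∀ i ∈ S, 0 < σ i := by
    intro i hi
    have : μ i ≠ 0 := (Finset.mem_filter.mp hi).2
    exact Real.sqrt_pos.mpr (lt_of_le_of_ne (hμ0 i) (Ne.symm this))
  have hudot : ∀ i (z : Fin n → ℂ),
      star (u i) ⬝ᵥ z = (((σ i)⁻¹ : ℝ) : ℂ) * (star (M *ᵥ v i) ⬝ᵥ z) := by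
    intro i z
    rw [hudef]
    simp only []
    rw [star_smul, smul_dotProduct, RCLike.star_def, Complex.conj_ofReal, smul_eq_mul]
  -- orthonormality of u on S
  have hu : ∀ i ∈ S, ∀ j ∈ S, star (u i) ⬝ᵥ u j = if i = j then 1 else 0 := by
    intro i hi j hj
    rw [hudot i, hudef]
    simp only []
    rw [dotProduct_smul, hMvv i j, smul_eq_mul]
    by_cases h : i = j
    · subst h
      simp only [if_pos rfl]
      have h1 : σ i ^ 2 = μ i := Real.sq_sqrt (hμ0 i)
      have h2 : σ i ≠ 0 := ne_of_gt (hσpos i hi)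
      have h3 : ((σ i)⁻¹ : ℝ) * (((σ i)⁻¹ : ℝ) * μ i) = 1 := by
        field_simp
        nlinarith [h1]
      calc (((σ i)⁻¹ : ℝ) : ℂ) * ((((σ i)⁻¹ : ℝ) : ℂ) * ((μ i : ℝ) : ℂ))
          = ((((σ i)⁻¹ : ℝ) * (((σ i)⁻¹ : ℝ) * μ i) : ℝ) : ℂ) := by push_cast; ring
        _ = 1 := by rw [h3]; norm_num
    · simp [h]
  -- σ i = re (star (u i) ⬝ᵥ (M *ᵥ v i)) on S
  have hσ_eq : ∀ i ∈ S, σ i = (star (u i) ⬝ᵥ (M *ᵥ v i)).re := by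
    intro i hi
    rw [hudot i, hMvv i i, if_pos rfl]
    have h1 : σ i ^ 2 = μ i := Real.sq_sqrt (hμ0 i)
    have h2 : σ i ≠ 0 := ne_of_gt (hσpos i hi)
    rw [← Complex.ofReal_mul, Complex.ofReal_re]
    field_simp
    nlinarith [h1]
  -- trace norm as sum of σ over S
  have htn : traceNorm M = ∑ i ∈ S, σ i := by
    rw [TNAux.traceNorm_eq_sum_sqrt M]
    refine (Finset.sum_subset (Finset.filter_subset _ _) ?_).symm
    intro j _ hj
    have hz : μ j = 0 := by
      by_contra hne
      exact hj (Finset.mem_filter.mpr ⟨Finset.mem_univ j, hne⟩)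
    show σ j = 0
    rw [hσdef]
    simp only []
    rw [hz, Real.sqrt_zero]
  -- Cauchy-Schwarz through X
  have habsX : ∀ p q : Fin n → ℂ, ‖star p ⬝ᵥ (X *ᵥ q)‖ ≤
      Real.sqrt ((star p ⬝ᵥ (X *ᵥ p)).re) * Real.sqrt ((star q ⬝ᵥ (X *ᵥ q)).re) := by
    have hkey : ∀ r s : Fin n → ℂ,
        star r ⬝ᵥ (X *ᵥ s) = star (TNAux.psdSqrt hX *ᵥ r) ⬝ᵥ (TNAux.psdSqrt hX *ᵥ s) := by
      intro r s
      conv_lhs => rw [← TNAux.psdSqrt_mul_self hX]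
      rw [← Matrix.mulVec_mulVec, TNAux.dot_shift, (TNAux.psdSqrt_posSemidef hX).1.eq]
    intro p q
    rw [hkey p q, hkey p p, hkey q q]
    exact TNAux.abs_star_dot_le _ _
  -- BXB is psd
  have hBXB : (B * X * B).PosSemidef := by
    have h := hX.mul_mul_conjTranspose_same B
    rwa [hBH] at h
  -- quadratic form values are nonneg
  have hqn : ∀ p : Fin n → ℂ, 0 ≤ (star p ⬝ᵥ (X *ᵥ p)).re := fun p =>
    hX.re_dotProduct_nonneg p
  have hqnB : ∀ p : Fin n → ℂ, 0 ≤ (star p ⬝ᵥ ((B * X * B) *ᵥ p)).re := fun p =>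
    hBXB.re_dotProduct_nonneg p
  set T : ℝ := X.trace.re with hT
  set K : ℝ := (B * X * B).trace.re with hK
  have hT0 : 0 ≤ T := TNAux.trace_re_nonneg hX
  -- the four sums
  have hsum_r : ∑ i ∈ S, (star (u i) ⬝ᵥ (X *ᵥ u i)).re ≤ T :=
    TNAux.sum_re_dot_le_trace hX S u hu
  have hsum_t : ∑ i ∈ S, (star (v i) ⬝ᵥ (X *ᵥ v i)).re ≤ T := by
    refine le_trans (Finset.sum_le_sum_of_subset_of_nonneg (Finset.filter_subset _ _)
      (fun i _ _ => hqn (v i))) ?_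
    exact TNAux.sum_re_dot_le_trace hX Finset.univ v (fun i _ j _ => hv i j)
  have hsum_s : ∑ i ∈ S, (star (B *ᵥ v i) ⬝ᵥ (X *ᵥ (B *ᵥ v i))).re ≤ K := by
    have h1 : ∀ i, (star (B *ᵥ v i) ⬝ᵥ (X *ᵥ (B *ᵥ v i))).re
        = (star (v i) ⬝ᵥ ((B * X * B) *ᵥ v i)).re := fun i => by
      rw [TNAux.dot_BXB B X hBH]
    simp_rw [h1]
    refine le_trans (Finset.sum_le_sum_of_subset_of_nonneg (Finset.filter_subset _ _)
      (fun i _ _ => hqnB (v i))) ?_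
    exact TNAux.sum_re_dot_le_trace hBXB Finset.univ v (fun i _ j _ => hv i j)
  have hsum_q : ∑ i ∈ S, (star (B *ᵥ u i) ⬝ᵥ (X *ᵥ (B *ᵥ u i))).re ≤ K := by
    have h1 : ∀ i, (star (B *ᵥ u i) ⬝ᵥ (X *ᵥ (B *ᵥ u i))).re
        = (star (u i) ⬝ᵥ ((B * X * B) *ᵥ u i)).re := fun i => by
      rw [TNAux.dot_BXB B X hBH]
    simp_rw [h1]
    exact TNAux.sum_re_dot_le_trace hBXB S u hu
  -- bound K
  have hKT : K ≤ e ^ 2 * T := by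
    have hR : (((e ^ 2 : ℝ) : ℂ) • (1 : Matrix (Fin n) (Fin n) ℂ) - B * B).PosSemidef := by
      have h := TNAux.smul_one_sub_conj_posSemidef U g (e ^ 2)
        (fun i => by nlinarith [hge i])
      rwa [← hBdef] at h
    exact TNAux.trace_mul_le_of_le hX (e ^ 2) hR
  -- per-index bound
  have hbound : ∀ i ∈ S, σ i ≤
      Real.sqrt ((star (u i) ⬝ᵥ (X *ᵥ u i)).re) *
        Real.sqrt ((star (B *ᵥ v i) ⬝ᵥ (X *ᵥ (B *ᵥ v i))).re)
      + Real.sqrt ((star (B *ᵥ u i) ⬝ᵥ (X *ᵥ (B *ᵥ u i))).re) *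
        Real.sqrt ((star (v i) ⬝ᵥ (X *ᵥ v i)).re) := by
    intro i hi
    have hMv : M *ᵥ v i = X *ᵥ (B *ᵥ v i) - B *ᵥ (X *ᵥ v i) := by
      rw [hMdef, Matrix.sub_mulVec, ← Matrix.mulVec_mulVec, ← Matrix.mulVec_mulVec]
    have hd2 : star (u i) ⬝ᵥ (B *ᵥ (X *ᵥ v i)) = star (B *ᵥ u i) ⬝ᵥ (X *ᵥ v i) := by
      rw [TNAux.dot_shift, hBH]
    have hre : σ i = (star (u i) ⬝ᵥ (X *ᵥ (B *ᵥ v i))).re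
        - (star (u i) ⬝ᵥ (B *ᵥ (X *ᵥ v i))).re := by
      rw [hσ_eq i hi, hMv, dotProduct_sub, Complex.sub_re]
    rw [hre, hd2]
    have h1 : (star (u i) ⬝ᵥ (X *ᵥ (B *ᵥ v i))).re
        ≤ ‖star (u i) ⬝ᵥ (X *ᵥ (B *ᵥ v i))‖ := Complex.re_le_norm _
    have h2 : -(star (B *ᵥ u i) ⬝ᵥ (X *ᵥ v i)).re
        ≤ ‖star (B *ᵥ u i) ⬝ᵥ (X *ᵥ v i)‖ := by
      have := Complex.abs_re_le_norm (star (B *ᵥ u i) ⬝ᵥ (X *ᵥ v i))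
      have h3 := neg_abs_le ((star (B *ᵥ u i) ⬝ᵥ (X *ᵥ v i)).re)
      linarith
    have h4 := habsX (u i) (B *ᵥ v i)
    have h5 := habsX (B *ᵥ u i) (v i)
    linarith
  -- assemble
  have hr2 : ∑ i ∈ S, Real.sqrt ((star (u i) ⬝ᵥ (X *ᵥ u i)).re) ^ 2 ≤ T := by
    refine le_trans (le_of_eq (Finset.sum_congr rfl fun i _ => Real.sq_sqrt (hqn _))) hsum_r
  have hs2 : ∑ i ∈ S, Real.sqrt ((star (B *ᵥ v i) ⬝ᵥ (X *ᵥ (B *ᵥ v i))).re) ^ 2 ≤ K := by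
    refine le_trans (le_of_eq (Finset.sum_congr rfl fun i _ => Real.sq_sqrt (hqn _))) hsum_s
  have hq2 : ∑ i ∈ S, Real.sqrt ((star (B *ᵥ u i) ⬝ᵥ (X *ᵥ (B *ᵥ u i))).re) ^ 2 ≤ K := by
    refine le_trans (le_of_eq (Finset.sum_congr rfl fun i _ => Real.sq_sqrt (hqn _))) hsum_q
  have ht2 : ∑ i ∈ S, Real.sqrt ((star (v i) ⬝ᵥ (X *ᵥ v i)).re) ^ 2 ≤ T := by
    refine le_trans (le_of_eq (Finset.sum_congr rfl fun i _ => Real.sq_sqrt (hqn _))) hsum_t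
  have hchain : ∑ i ∈ S, σ i ≤ Real.sqrt T * Real.sqrt K + Real.sqrt K * Real.sqrt T := by
    calc ∑ i ∈ S, σ i
        ≤ ∑ i ∈ S, (Real.sqrt ((star (u i) ⬝ᵥ (X *ᵥ u i)).re) *
            Real.sqrt ((star (B *ᵥ v i) ⬝ᵥ (X *ᵥ (B *ᵥ v i))).re)
          + Real.sqrt ((star (B *ᵥ u i) ⬝ᵥ (X *ᵥ (B *ᵥ u i))).re) *
            Real.sqrt ((star (v i) ⬝ᵥ (X *ᵥ v i)).re)) := Finset.sum_le_sum hbound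
      _ = (∑ i ∈ S, Real.sqrt ((star (u i) ⬝ᵥ (X *ᵥ u i)).re) *
            Real.sqrt ((star (B *ᵥ v i) ⬝ᵥ (X *ᵥ (B *ᵥ v i))).re))
          + ∑ i ∈ S, Real.sqrt ((star (B *ᵥ u i) ⬝ᵥ (X *ᵥ (B *ᵥ u i))).re) *
            Real.sqrt ((star (v i) ⬝ᵥ (X *ᵥ v i)).re) := Finset.sum_add_distrib
      _ ≤ Real.sqrt (∑ i ∈ S, Real.sqrt ((star (u i) ⬝ᵥ (X *ᵥ u i)).re) ^ 2) *
            Real.sqrt (∑ i ∈ S, Real.sqrt ((star (B *ᵥ v i) ⬝ᵥ (X *ᵥ (B *ᵥ v i))).re) ^ 2)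
          + Real.sqrt (∑ i ∈ S, Real.sqrt ((star (B *ᵥ u i) ⬝ᵥ (X *ᵥ (B *ᵥ u i))).re) ^ 2) *
            Real.sqrt (∑ i ∈ S, Real.sqrt ((star (v i) ⬝ᵥ (X *ᵥ v i)).re) ^ 2) :=
          add_le_add (TNAux.sum_mul_le_sqrt_mul_sqrt S _ _) (TNAux.sum_mul_le_sqrt_mul_sqrt S _ _)
      _ ≤ Real.sqrt T * Real.sqrt K + Real.sqrt K * Real.sqrt T := by
          refine add_le_add (mul_le_mul (Real.sqrt_le_sqrt hr2) (Real.sqrt_le_sqrt hs2)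
            (Real.sqrt_nonneg _) (Real.sqrt_nonneg _))
            (mul_le_mul (Real.sqrt_le_sqrt hq2) (Real.sqrt_le_sqrt ht2)
            (Real.sqrt_nonneg _) (Real.sqrt_nonneg _))
  have hKsqrt : Real.sqrt K ≤ e * Real.sqrt T := by
    calc Real.sqrt K ≤ Real.sqrt (e ^ 2 * T) := Real.sqrt_le_sqrt hKT
      _ = e * Real.sqrt T := by rw [Real.sqrt_mul (sq_nonneg e), Real.sqrt_sq he0]
  have hprod : Real.sqrt T * Real.sqrt K ≤ e * T := by
    calc Real.sqrt T * Real.sqrt K ≤ Real.sqrt T * (e * Real.sqrt T) :=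
          mul_le_mul_of_nonneg_left hKsqrt (Real.sqrt_nonneg T)
      _ = e * (Real.sqrt T * Real.sqrt T) := by ring
      _ = e * T := by rw [Real.mul_self_sqrt hT0]
  have hfinal : (2 : ℝ) * (e * T) = T * (f b - f a) := by rw [he]; ring
  calc traceNorm M = ∑ i ∈ S, σ i := htn
    _ ≤ Real.sqrt T * Real.sqrt K + Real.sqrt K * Real.sqrt T := hchain
    _ ≤ e * T + e * T := by
        have h6 : Real.sqrt K * Real.sqrt T ≤ e * T := by rw [mul_comm]; exact hprod
        linarith
    _ = T * (f b - f a) := by linarith [hfinal]
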